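/- (Subcomplex property) For n, r ≥ 1 and 0 ≤ k < n, d S_r^−Λ^k(ℝ^n) ⊆ S_r^−Λ^{k+1}(ℝ^n), i.e., the trimmed serendipity spaces of a fixed order r form a cochain complex under the exterior derivative. -/

import Mathlib

open MvPolynomial

/-- Polynomial differential forms on `ℝ^n`: a family of polynomial coefficients indexed by
subsets `σ ⊆ {1,…,n}`; a `k`-form is supported on sets of cardinality `k`. -/
abbrev PolyForm (n : ℕ) := Finset (Fin n) → MvPolynomial (Fin n) ℝ

/-- The sign `(-1)^{#{j ∈ σ : j < i}}`. -/
noncomputable def sgn {n : ℕ} (σ : Finset (Fin n)) (i : Fin n) : MvPolynomial (Fin n) ℝ :=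
  (-1) ^ (σ.filter (fun j => j < i)).card

/-- The exterior derivative `d`. -/
noncomputable def extD (n : ℕ) : PolyForm n →ₗ[ℝ] PolyForm n where
  toFun ω := fun σ => ∑ i ∈ σ, sgn σ i * pderiv i (ω (σ.erase i))
  map_add' ω η := by
    funext σ
    simp [Pi.add_apply, mul_add, Finset.sum_add_distrib]
  map_smul' c ω := by
    funext σ
    simp [Pi.smul_apply, Finset.smul_sum, mul_smul_comm]

/-- The Koszul operator `κ` (contraction with the position vector field). -/
noncomputable def koszul (n : ℕ) : PolyForm n →ₗ[ℝ] PolyForm n where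
  toFun ω := fun σ => ∑ i ∈ σᶜ, sgn σ i * X i * ω (insert i σ)
  map_add' ω η := by
    funext σ
    simp [Pi.add_apply, mul_add, Finset.sum_add_distrib]
  map_smul' c ω := by
    funext σ
    simp [Pi.smul_apply, Finset.smul_sum, mul_smul_comm]

/-- The space of (polynomial) differential `k`-forms: families supported on index sets of
cardinality `k`. -/
noncomputable def Lambda (n k : ℕ) : Submodule ℝ (PolyForm n) where
  carrier := {ω | ∀ σ, σ.card ≠ k → ω σ = 0}
  zero_mem' := fun σ _ => rfl
  add_mem' := fun ha hb σ h => by simp only [Pi.add_apply, ha σ h, hb σ h, add_zero]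
  smul_mem' := fun c ω h σ hσ => by simp only [Pi.smul_apply, h σ hσ, smul_zero]

/-- The form monomial `x^α dx_σ`. -/
noncomputable def formMonomial {n : ℕ} (α : Fin n →₀ ℕ) (σ : Finset (Fin n)) : PolyForm n :=
  fun τ => if τ = σ then monomial α 1 else 0

/-- The (total) degree `|α|` of a multi-index. -/
def mdeg {n : ℕ} (α : Fin n →₀ ℕ) : ℕ := α.sum fun _ m => m

/-- The linear degree of the form monomial `x^α dx_σ`: the number of `i ∉ σ` with `α i = 1`. -/
def ldeg {n : ℕ} (α : Fin n →₀ ℕ) (σ : Finset (Fin n)) : ℕ :=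
  ((σᶜ).filter fun i => α i = 1).card

/-- `H_rΛ^k(ℝ^n)`: `k`-forms with homogeneous degree-`r` polynomial coefficients. -/
noncomputable def Hspace (n r k : ℕ) : Submodule ℝ (PolyForm n) :=
  Submodule.span ℝ {ω | ∃ α σ, σ.card = k ∧ mdeg α = r ∧ ω = formMonomial α σ}

/-- `P_rΛ^k(ℝ^n)`: `k`-forms with polynomial coefficients of degree at most `r`. -/
noncomputable def Pspace (n r k : ℕ) : Submodule ℝ (PolyForm n) :=
  Submodule.span ℝ {ω | ∃ α σ, σ.card = k ∧ mdeg α ≤ r ∧ ω = formMonomial α σ}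

/-- `H_{r,l}Λ^k(ℝ^n)`: homogeneous degree-`r` `k`-forms of linear degree at least `l`. -/
noncomputable def Hl (n r l k : ℕ) : Submodule ℝ (PolyForm n) :=
  Submodule.span ℝ
    {ω | ∃ α σ, σ.card = k ∧ mdeg α = r ∧ l ≤ ldeg α σ ∧ ω = formMonomial α σ}

/-- `J_rΛ^k(ℝ^n) := Σ_{l ≥ 1} κ H_{r+l-1, l}Λ^{k+1}(ℝ^n)` (here `l` is reindexed as `l+1`). -/
noncomputable def Jspace (n r k : ℕ) : Submodule ℝ (PolyForm n) :=
  ⨆ l : ℕ, Submodule.map (koszul n) (Hl n (r + l) (l + 1) (k + 1))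

/-- The trimmed polynomial space `P_r^-Λ^k := P_{r-1}Λ^k ⊕ κ H_{r-1}Λ^{k+1}`. -/
noncomputable def PminusSpace (n r k : ℕ) : Submodule ℝ (PolyForm n) :=
  Pspace n (r - 1) k ⊔ Submodule.map (koszul n) (Hspace n (r - 1) (k + 1))

/-- The serendipity space `S_rΛ^k := P_rΛ^k + J_rΛ^k + d J_{r+1}Λ^{k-1}`
(the last summand being absent for `k = 0`). -/
noncomputable def Sspace (n r k : ℕ) : Submodule ℝ (PolyForm n) :=
  Pspace n r k ⊔ Jspace n r k ⊔
    (if k = 0 then ⊥ else Submodule.map (extD n) (Jspace n (r + 1) (k - 1)))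

/-- The trimmed serendipity space `S_r^-Λ^k := S_{r-1}Λ^k + κ S_{r-1}Λ^{k+1}`. -/
noncomputable def SminusSpace (n r k : ℕ) : Submodule ℝ (PolyForm n) :=
  Sspace n (r - 1) k ⊔ Submodule.map (koszul n) (Sspace n (r - 1) (k + 1))

section AuxSgn

variable {n : ℕ}

noncomputable def rsgn (σ : Finset (Fin n)) (i : Fin n) : ℝ :=
  (-1) ^ (σ.filter (fun j => j < i)).card

lemma sgn_eq_C (σ : Finset (Fin n)) (i : Fin n) : sgn σ i = C (rsgn σ i) := by
  simp [sgn, rsgn]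

lemma sgn_mul_self (σ : Finset (Fin n)) (i : Fin n) : sgn σ i * sgn σ i = 1 := by
  rw [sgn, ← pow_add]
  exact Even.neg_one_pow ⟨_, rfl⟩

lemma sgn_erase_of_not_lt (σ : Finset (Fin n)) {i j : Fin n} (h : ¬ i < j) :
    sgn (σ.erase i) j = sgn σ j := by
  rw [sgn, sgn, Finset.filter_erase, Finset.erase_eq_of_notMem]
  simp [h]

lemma sgn_insert_of_not_lt (σ : Finset (Fin n)) {i j : Fin n} (h : ¬ i < j) :
    sgn (insert i σ) j = sgn σ j := by
  rw [sgn, sgn, Finset.filter_insert, if_neg h]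

lemma sgn_erase_of_lt {σ : Finset (Fin n)} {i j : Fin n} (hi : i ∈ σ) (h : i < j) :
    sgn (σ.erase i) j = - sgn σ j := by
  have hmem : i ∈ σ.filter (fun x => x < j) := Finset.mem_filter.mpr ⟨hi, h⟩
  rw [sgn, sgn, Finset.filter_erase, Finset.card_erase_of_mem hmem]
  have hc : 0 < (σ.filter (fun x => x < j)).card :=
    Finset.card_pos.mpr ⟨i, Finset.mem_filter.mpr ⟨hi, h⟩⟩
  obtain ⟨m, hm⟩ := Nat.exists_eq_succ_of_ne_zero hc.ne'
  rw [hm]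
  simp [pow_succ]

lemma sgn_insert_of_lt {σ : Finset (Fin n)} {i j : Fin n} (hi : i ∉ σ) (h : i < j) :
    sgn (insert i σ) j = - sgn σ j := by
  rw [sgn, sgn, Finset.filter_insert, if_pos h,
    Finset.card_insert_of_notMem (fun hc => hi (Finset.mem_filter.mp hc).1)]
  simp [pow_succ]

lemma sgn_antisymm_erase {σ : Finset (Fin n)} {i j : Fin n} (hi : i ∈ σ) (hj : j ∈ σ)
    (hij : i ≠ j) : sgn σ i * sgn (σ.erase i) j = -(sgn σ j * sgn (σ.erase j) i) := by
  rcases hij.lt_or_gt with h | h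
  · rw [sgn_erase_of_lt hi h, sgn_erase_of_not_lt σ (asymm h)]; ring
  · rw [sgn_erase_of_not_lt σ (asymm h), sgn_erase_of_lt hj h]; ring

lemma sgn_antisymm_insert {σ : Finset (Fin n)} {i j : Fin n} (hi : i ∉ σ) (hj : j ∉ σ)
    (hij : i ≠ j) : sgn σ i * sgn (insert i σ) j = -(sgn σ j * sgn (insert j σ) i) := by
  rcases hij.lt_or_gt with h | h
  · rw [sgn_insert_of_lt hi h, sgn_insert_of_not_lt σ (asymm h)]; ring
  · rw [sgn_insert_of_not_lt σ (asymm h), sgn_insert_of_lt hj h]; ring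

lemma sgn_antisymm_mixed {τ : Finset (Fin n)} {i j : Fin n} (hi : i ∈ τ) (hj : j ∉ τ) :
    sgn τ i * sgn (τ.erase i) j = -(sgn τ j * sgn (insert j τ) i) := by
  have hij : i ≠ j := fun h => hj (h ▸ hi)
  rcases hij.lt_or_gt with h | h
  · rw [sgn_erase_of_lt hi h, sgn_insert_of_not_lt τ (asymm h)]; ring
  · rw [sgn_erase_of_not_lt τ (asymm h), sgn_insert_of_lt hj h]; ring

end AuxSgn
section AuxOps

variable {n : ℕ}

lemma extD_apply (ω : PolyForm n) (τ : Finset (Fin n)) :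
    extD n ω τ = ∑ i ∈ τ, sgn τ i * pderiv i (ω (τ.erase i)) := rfl

lemma koszul_apply (ω : PolyForm n) (τ : Finset (Fin n)) :
    koszul n ω τ = ∑ i ∈ τᶜ, sgn τ i * X i * ω (insert i τ) := rfl

lemma pderiv_pderiv_comm (i j : Fin n) (p : MvPolynomial (Fin n) ℝ) :
    pderiv i (pderiv j p) = pderiv j (pderiv i p) := by
  induction p using MvPolynomial.induction_on' with
  | monomial u a =>
    by_cases hij : i = j
    · subst hij; rfl
    · rw [pderiv_monomial, pderiv_monomial, pderiv_monomial, pderiv_monomial]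
      have h1 : u - Finsupp.single j 1 - Finsupp.single i 1
          = u - Finsupp.single i 1 - Finsupp.single j 1 := by
        rw [tsub_tsub, tsub_tsub, add_comm]
      have h2 : ((u - Finsupp.single j 1 : Fin n →₀ ℕ)) i = u i := by
        rw [Finsupp.tsub_apply, Finsupp.single_apply, if_neg (Ne.symm hij), tsub_zero]
      have h3 : ((u - Finsupp.single i 1 : Fin n →₀ ℕ)) j = u j := by
        rw [Finsupp.tsub_apply, Finsupp.single_apply, if_neg hij, tsub_zero]
      rw [h1, h2, h3]
      ring_nf
  | add p q hp hq => simp [hp, hq]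

lemma sum_erase_antisymm {M : Type*} [AddCommGroup M] [Module ℝ M] (s : Finset (Fin n))
    (F : Fin n → Fin n → M) (hF : ∀ i ∈ s, ∀ j ∈ s.erase i, F i j = - F j i) :
    ∑ i ∈ s, ∑ j ∈ s.erase i, F i j = 0 := by
  rw [Finset.sum_sigma' s (fun i => s.erase i) (fun i j => F i j)]
  set S := ∑ x ∈ s.sigma (fun i => s.erase i), F x.1 x.2 with hS
  have key : S = ∑ x ∈ s.sigma (fun i => s.erase i), (- F x.1 x.2) := by
    rw [hS]
    refine Finset.sum_nbij' (fun x => ⟨x.2, x.1⟩) (fun x => ⟨x.2, x.1⟩) ?_ ?_ ?_ ?_ ?_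
    · rintro ⟨a, b⟩ hab
      rw [Finset.mem_sigma] at hab ⊢
      obtain ⟨h1, h2⟩ := hab
      dsimp only at h1 h2 ⊢
      exact ⟨Finset.mem_of_mem_erase h2,
        Finset.mem_erase.mpr ⟨(Finset.ne_of_mem_erase h2).symm, h1⟩⟩
    · rintro ⟨a, b⟩ hab
      rw [Finset.mem_sigma] at hab ⊢
      obtain ⟨h1, h2⟩ := hab
      dsimp only at h1 h2 ⊢
      exact ⟨Finset.mem_of_mem_erase h2,
        Finset.mem_erase.mpr ⟨(Finset.ne_of_mem_erase h2).symm, h1⟩⟩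
    · rintro ⟨a, b⟩ _; rfl
    · rintro ⟨a, b⟩ _; rfl
    · rintro ⟨a, b⟩ hab
      rw [Finset.mem_sigma] at hab
      obtain ⟨h1, h2⟩ := hab
      dsimp only at h1 h2 ⊢
      simpa using hF a h1 b h2
  have h2 : (2 : ℝ) • S = 0 := by
    rw [two_smul]
    nth_rewrite 2 [key]
    rw [← Finset.sum_add_distrib]
    simp
  have := congrArg (fun y => (2 : ℝ)⁻¹ • y) h2
  simpa [smul_smul] using this

lemma extD_extD (ω : PolyForm n) : extD n (extD n ω) = 0 := by
  funext τ
  rw [extD_apply]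
  have step : ∀ i ∈ τ, sgn τ i * pderiv i (extD n ω (τ.erase i))
      = ∑ j ∈ τ.erase i,
          (sgn τ i * sgn (τ.erase i) j) * pderiv i (pderiv j (ω ((τ.erase i).erase j))) := by
    intro i _
    rw [extD_apply, map_sum, Finset.mul_sum]
    refine Finset.sum_congr rfl fun j _ => ?_
    rw [sgn_eq_C (τ.erase i) j, pderiv_C_mul, ← sgn_eq_C, mul_assoc]
  rw [Finset.sum_congr rfl step]
  rw [sum_erase_antisymm τ _ ?_]
  · rfl
  intro i hi j hj
  have hjτ : j ∈ τ := Finset.mem_of_mem_erase hj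
  have hij : i ≠ j := (Finset.ne_of_mem_erase hj).symm
  rw [Finset.erase_right_comm (a := i) (b := j), pderiv_pderiv_comm,
    sgn_antisymm_erase hi hjτ hij, neg_mul]

lemma koszul_koszul (ω : PolyForm n) : koszul n (koszul n ω) = 0 := by
  funext τ
  rw [koszul_apply]
  have step : ∀ i ∈ τᶜ, sgn τ i * X i * koszul n ω (insert i τ)
      = ∑ j ∈ τᶜ.erase i,
          (sgn τ i * sgn (insert i τ) j) * (X i * (X j * ω (insert j (insert i τ)))) := by
    intro i _
    rw [koszul_apply, Finset.compl_insert, Finset.mul_sum]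
    refine Finset.sum_congr rfl fun j _ => ?_
    ring
  rw [Finset.sum_congr rfl step]
  rw [sum_erase_antisymm τᶜ _ ?_]
  · rfl
  intro i hi j hj
  have hjc : j ∈ τᶜ := Finset.mem_of_mem_erase hj
  have hij : i ≠ j := (Finset.ne_of_mem_erase hj).symm
  rw [Finset.insert_comm, sgn_antisymm_insert (Finset.mem_compl.mp hi) (Finset.mem_compl.mp hjc) hij]
  ring

end AuxOps
section AuxCartan

variable {n : ℕ}

lemma cartan (ω : PolyForm n) (τ : Finset (Fin n)) :
    extD n (koszul n ω) τ + koszul n (extD n ω) τ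
      = (∑ i : Fin n, X i * pderiv i (ω τ)) + τ.card • ω τ := by
  have h1 : extD n (koszul n ω) τ
      = (τ.card • ω τ + ∑ i ∈ τ, X i * pderiv i (ω τ))
        + ∑ i ∈ τ, ∑ j ∈ τᶜ,
            (sgn τ i * sgn (τ.erase i) j) * (X j * pderiv i (ω (insert j (τ.erase i)))) := by
    rw [extD_apply]
    have step : ∀ i ∈ τ, sgn τ i * pderiv i (koszul n ω (τ.erase i))
        = (ω τ + X i * pderiv i (ω τ))
          + ∑ j ∈ τᶜ,
              (sgn τ i * sgn (τ.erase i) j) * (X j * pderiv i (ω (insert j (τ.erase i)))) := by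
      intro i hi
      have hic : i ∉ τᶜ := by simp [hi]
      rw [koszul_apply, Finset.compl_erase, Finset.sum_insert hic, Finset.insert_erase hi]
      rw [map_add, mul_add]
      congr 1
      · -- diagonal term
        rw [sgn_erase_of_not_lt τ (lt_irrefl i), sgn_eq_C, mul_assoc, pderiv_C_mul,
          pderiv_mul, pderiv_X_self, one_mul, ← sgn_eq_C, ← mul_assoc, sgn_mul_self, one_mul]
      · -- cross terms
        rw [map_sum, Finset.mul_sum]
        refine Finset.sum_congr rfl fun j hj => ?_
        have hij : j ≠ i := by
          rintro rfl; exact (Finset.mem_compl.mp hj) hi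
        rw [sgn_eq_C (τ.erase i) j, mul_assoc, pderiv_C_mul, pderiv_mul,
          pderiv_X_of_ne hij, zero_mul, zero_add, ← sgn_eq_C]
        ring
    rw [Finset.sum_congr rfl step, Finset.sum_add_distrib, Finset.sum_add_distrib,
      Finset.sum_const]
  have h2 : koszul n (extD n ω) τ
      = (∑ j ∈ τᶜ, X j * pderiv j (ω τ))
        + ∑ j ∈ τᶜ, ∑ i ∈ τ,
            (sgn τ j * sgn (insert j τ) i) * (X j * pderiv i (ω ((insert j τ).erase i))) := by
    rw [koszul_apply]
    have step : ∀ j ∈ τᶜ, sgn τ j * X j * extD n ω (insert j τ)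
        = X j * pderiv j (ω τ)
          + ∑ i ∈ τ,
              (sgn τ j * sgn (insert j τ) i) * (X j * pderiv i (ω ((insert j τ).erase i))) := by
      intro j hj
      have hjτ : j ∉ τ := Finset.mem_compl.mp hj
      rw [extD_apply, Finset.sum_insert hjτ, Finset.erase_insert hjτ, mul_add]
      congr 1
      · rw [sgn_insert_of_not_lt τ (lt_irrefl j),
          show sgn τ j * X j * (sgn τ j * pderiv j (ω τ))
            = (sgn τ j * sgn τ j) * (X j * pderiv j (ω τ)) from by ring,
          sgn_mul_self, one_mul]
      · rw [Finset.mul_sum]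
        refine Finset.sum_congr rfl fun i _ => ?_
        ring
    rw [Finset.sum_congr rfl step, Finset.sum_add_distrib]
  rw [h1, h2]
  have hcross : (∑ i ∈ τ, ∑ j ∈ τᶜ,
        (sgn τ i * sgn (τ.erase i) j) * (X j * pderiv i (ω (insert j (τ.erase i)))))
      + ∑ j ∈ τᶜ, ∑ i ∈ τ,
        (sgn τ j * sgn (insert j τ) i) * (X j * pderiv i (ω ((insert j τ).erase i))) = 0 := by
    rw [Finset.sum_comm (s := τᶜ) (t := τ), ← Finset.sum_add_distrib]
    refine Finset.sum_eq_zero fun i hi => ?_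
    rw [← Finset.sum_add_distrib]
    refine Finset.sum_eq_zero fun j hj => ?_
    have hjτ : j ∉ τ := Finset.mem_compl.mp hj
    have hji : j ≠ i := by rintro rfl; exact hjτ hi
    rw [Finset.erase_insert_of_ne hji, sgn_antisymm_mixed hi hjτ]
    ring
  have hsplit : (∑ i ∈ τ, X i * pderiv i (ω τ)) + ∑ j ∈ τᶜ, X j * pderiv j (ω τ)
      = ∑ i : Fin n, X i * pderiv i (ω τ) := Finset.sum_add_sum_compl τ _
  calc (τ.card • ω τ + ∑ i ∈ τ, X i * pderiv i (ω τ))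
        + (∑ i ∈ τ, ∑ j ∈ τᶜ, (sgn τ i * sgn (τ.erase i) j) * (X j * pderiv i (ω (insert j (τ.erase i)))))
        + ((∑ j ∈ τᶜ, X j * pderiv j (ω τ))
          + ∑ j ∈ τᶜ, ∑ i ∈ τ, (sgn τ j * sgn (insert j τ) i) * (X j * pderiv i (ω ((insert j τ).erase i))))
      = ((∑ i ∈ τ, X i * pderiv i (ω τ)) + ∑ j ∈ τᶜ, X j * pderiv j (ω τ)) + τ.card • ω τ
        + ((∑ i ∈ τ, ∑ j ∈ τᶜ, (sgn τ i * sgn (τ.erase i) j) * (X j * pderiv i (ω (insert j (τ.erase i)))))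
          + ∑ j ∈ τᶜ, ∑ i ∈ τ, (sgn τ j * sgn (insert j τ) i) * (X j * pderiv i (ω ((insert j τ).erase i)))) := by
        abel
    _ = (∑ i : Fin n, X i * pderiv i (ω τ)) + τ.card • ω τ := by
        rw [hcross, hsplit, add_zero]

end AuxCartan
section AuxDeg

variable {n : ℕ}

lemma mdeg_eq (α : Fin n →₀ ℕ) : mdeg α = ∑ i : Fin n, α i := by
  rw [mdeg, Finsupp.sum_fintype]
  intro i; rfl

lemma mdeg_add_single (α : Fin n →₀ ℕ) (i : Fin n) :
    mdeg (α + Finsupp.single i 1) = mdeg α + 1 := by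
  rw [mdeg_eq, mdeg_eq]
  have : ∀ j : Fin n, ((α + Finsupp.single i 1 : Fin n →₀ ℕ)) j = α j + (if i = j then 1 else 0) := by
    intro j; rw [Finsupp.add_apply, Finsupp.single_apply]
  rw [Finset.sum_congr rfl fun j _ => this j, Finset.sum_add_distrib]
  simp

lemma mdeg_sub_single (α : Fin n →₀ ℕ) (i : Fin n) (h : α i ≠ 0) :
    mdeg (α - Finsupp.single i 1) + 1 = mdeg α := by
  have hα : α - Finsupp.single i 1 + Finsupp.single i 1 = α := by
    ext j
    rw [Finsupp.add_apply, Finsupp.tsub_apply, Finsupp.single_apply]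
    by_cases hj : i = j
    · subst hj; simp; omega
    · simp [hj]
  conv_rhs => rw [← hα]
  rw [mdeg_add_single]

lemma ldeg_le_mdeg (α : Fin n →₀ ℕ) (σ : Finset (Fin n)) : ldeg α σ ≤ mdeg α := by
  rw [ldeg, mdeg_eq, Finset.card_eq_sum_ones]
  calc ∑ _i ∈ (σᶜ).filter (fun i => α i = 1), 1
      ≤ ∑ i ∈ (σᶜ).filter (fun i => α i = 1), α i :=
        Finset.sum_le_sum fun i hi => by rw [(Finset.mem_filter.mp hi).2]
    _ ≤ ∑ i : Fin n, α i :=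
        Finset.sum_le_sum_of_subset (Finset.subset_univ _)

end AuxDeg
section AuxFormulas

variable {n : ℕ}

lemma euler_monomial (α : Fin n →₀ ℕ) :
    ∑ i : Fin n, X i * pderiv i (monomial α (1 : ℝ)) = (mdeg α : ℝ) • monomial α 1 := by
  have h : ∀ i : Fin n, X i * pderiv i (monomial α (1 : ℝ)) = (α i : ℝ) • monomial α 1 := by
    intro i
    rw [pderiv_monomial, one_mul]
    by_cases h0 : α i = 0
    · simp [h0]
    · have h1 : Finsupp.single i 1 + (α - Finsupp.single i 1) = α := by
        ext j
        rw [Finsupp.add_apply, Finsupp.tsub_apply, Finsupp.single_apply]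
        by_cases hj : i = j
        · subst hj; simp; omega
        · simp [hj]
      rw [show (X i : MvPolynomial (Fin n) ℝ) = monomial (Finsupp.single i 1) 1 from rfl,
        monomial_mul, h1, one_mul, smul_monomial]
      norm_num
  rw [Finset.sum_congr rfl fun i _ => h i, ← Finset.sum_smul]
  congr 1
  rw [mdeg_eq]
  push_cast
  rfl

lemma cartan_formMonomial (α : Fin n →₀ ℕ) (σ : Finset (Fin n)) :
    extD n (koszul n (formMonomial α σ)) + koszul n (extD n (formMonomial α σ))
      = ((mdeg α + σ.card : ℕ) : ℝ) • formMonomial α σ := by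
  funext τ
  rw [Pi.add_apply, Pi.smul_apply, cartan]
  by_cases h : τ = σ
  · subst h
    rw [show formMonomial α τ τ = monomial α 1 from if_pos rfl, euler_monomial]
    rw [← Nat.cast_smul_eq_nsmul ℝ τ.card]
    rw [← add_smul]
    push_cast
    ring_nf
  · rw [show formMonomial α σ τ = 0 from if_neg h]
    simp

lemma koszul_formMonomial (α : Fin n →₀ ℕ) (σ : Finset (Fin n)) :
    koszul n (formMonomial α σ)
      = ∑ i ∈ σ, rsgn σ i • formMonomial (α + Finsupp.single i 1) (σ.erase i) := by
  funext τ
  have hfm : ∀ ρ, formMonomial α σ ρ = if ρ = σ then monomial α 1 else 0 := fun _ => rfl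
  set f : Fin n → MvPolynomial (Fin n) ℝ := fun i =>
    if i ∈ σ ∧ τ = σ.erase i then monomial (α + Finsupp.single i 1) (rsgn σ i) else 0 with hf
  have hf' : ∀ i, f i = if i ∈ σ ∧ τ = σ.erase i
      then monomial (α + Finsupp.single i 1) (rsgn σ i) else 0 := fun _ => rfl
  have lhs : koszul n (formMonomial α σ) τ = ∑ i : Fin n, f i := by
    rw [koszul_apply]
    have h1 : ∀ i ∈ τᶜ, sgn τ i * X i * formMonomial α σ (insert i τ) = f i := by
      intro i hi
      have hiτ : i ∉ τ := Finset.mem_compl.mp hi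
      rw [hf', hfm]
      by_cases hc : insert i τ = σ
      · have hiσ : i ∈ σ := hc ▸ Finset.mem_insert_self i τ
        have hτ : τ = σ.erase i := by rw [← hc, Finset.erase_insert hiτ]
        rw [if_pos hc, if_pos ⟨hiσ, hτ⟩]
        rw [hτ, sgn_erase_of_not_lt σ (lt_irrefl i), sgn_eq_C,
          show (X i : MvPolynomial (Fin n) ℝ) = monomial (Finsupp.single i 1) 1 from rfl,
          mul_assoc, monomial_mul, C_mul_monomial]
        rw [add_comm (Finsupp.single i 1) α]
        norm_num
      · rw [if_neg hc, mul_zero]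
        by_cases hc2 : i ∈ σ ∧ τ = σ.erase i
        · exact absurd (by rw [hc2.2, Finset.insert_erase hc2.1]) hc
        · rw [if_neg hc2]
    rw [Finset.sum_congr rfl h1]
    refine Finset.sum_subset (Finset.subset_univ τᶜ) (fun i _ hi => ?_)
    by_cases hc : i ∈ σ ∧ τ = σ.erase i
    · exact absurd (hc.2 ▸ Finset.notMem_erase i σ) (by simpa using hi)
    · exact if_neg hc
  have rhs : (∑ i ∈ σ, rsgn σ i • formMonomial (α + Finsupp.single i 1) (σ.erase i)) τ
      = ∑ i : Fin n, f i := by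
    rw [Finset.sum_apply]
    have h1 : ∀ i ∈ σ, (rsgn σ i • formMonomial (α + Finsupp.single i 1) (σ.erase i)) τ
        = f i := by
      intro i hi
      rw [Pi.smul_apply, hf']
      by_cases hc : τ = σ.erase i
      · rw [if_pos ⟨hi, hc⟩, show formMonomial (α + Finsupp.single i 1) (σ.erase i) τ
            = monomial (α + Finsupp.single i 1) 1 from if_pos hc, smul_monomial]
        norm_num
      · rw [if_neg (fun h => hc h.2), show formMonomial (α + Finsupp.single i 1) (σ.erase i) τ
            = 0 from if_neg hc, smul_zero]
    rw [Finset.sum_congr rfl h1]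
    refine Finset.sum_subset (Finset.subset_univ σ) (fun i _ hi => ?_)
    rw [if_neg (fun hc : i ∈ σ ∧ τ = σ.erase i => hi hc.1)]
  rw [lhs, rhs]

lemma extD_formMonomial (α : Fin n →₀ ℕ) (σ : Finset (Fin n)) :
    extD n (formMonomial α σ)
      = ∑ i ∈ σᶜ, (rsgn σ i * (α i : ℝ)) • formMonomial (α - Finsupp.single i 1) (insert i σ) := by
  funext τ
  have hfm : ∀ ρ, formMonomial α σ ρ = if ρ = σ then monomial α 1 else 0 := fun _ => rfl
  set f : Fin n → MvPolynomial (Fin n) ℝ := fun i =>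
    if i ∉ σ ∧ τ = insert i σ then monomial (α - Finsupp.single i 1) (rsgn σ i * (α i : ℝ))
    else 0 with hf
  have hf' : ∀ i, f i = if i ∉ σ ∧ τ = insert i σ
      then monomial (α - Finsupp.single i 1) (rsgn σ i * (α i : ℝ)) else 0 := fun _ => rfl
  have lhs : extD n (formMonomial α σ) τ = ∑ i : Fin n, f i := by
    rw [extD_apply]
    have h1 : ∀ i ∈ τ, sgn τ i * pderiv i (formMonomial α σ (τ.erase i)) = f i := by
      intro i hi
      rw [hf', hfm]
      by_cases hc : τ.erase i = σ
      · have hiσ : i ∉ σ := hc ▸ Finset.notMem_erase i τ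
        have hτ : τ = insert i σ := by rw [← hc, Finset.insert_erase hi]
        rw [if_pos hc, if_pos ⟨hiσ, hτ⟩]
        rw [pderiv_monomial, hτ, sgn_insert_of_not_lt σ (lt_irrefl i), sgn_eq_C,
          C_mul_monomial, one_mul]
      · rw [if_neg hc, map_zero, mul_zero]
        by_cases hc2 : i ∉ σ ∧ τ = insert i σ
        · exact absurd (by rw [hc2.2, Finset.erase_insert hc2.1]) hc
        · rw [if_neg hc2]
    rw [Finset.sum_congr rfl h1]
    refine Finset.sum_subset (Finset.subset_univ τ) (fun i _ hi => ?_)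
    by_cases hc : i ∉ σ ∧ τ = insert i σ
    · exact absurd (hc.2 ▸ Finset.mem_insert_self i σ) hi
    · exact if_neg hc
  have rhs : (∑ i ∈ σᶜ, (rsgn σ i * (α i : ℝ)) • formMonomial (α - Finsupp.single i 1)
        (insert i σ)) τ = ∑ i : Fin n, f i := by
    rw [Finset.sum_apply]
    have h1 : ∀ i ∈ σᶜ, ((rsgn σ i * (α i : ℝ)) • formMonomial (α - Finsupp.single i 1)
        (insert i σ)) τ = f i := by
      intro i hi
      have hiσ : i ∉ σ := Finset.mem_compl.mp hi
      rw [Pi.smul_apply, hf']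
      by_cases hc : τ = insert i σ
      · rw [if_pos ⟨hiσ, hc⟩, show formMonomial (α - Finsupp.single i 1) (insert i σ) τ
            = monomial (α - Finsupp.single i 1) 1 from if_pos hc, smul_monomial]
        norm_num
      · rw [if_neg (fun h => hc h.2), show formMonomial (α - Finsupp.single i 1) (insert i σ) τ
            = 0 from if_neg hc, smul_zero]
    rw [Finset.sum_congr rfl h1]
    refine Finset.sum_subset (Finset.subset_univ σᶜ) (fun i _ hi => ?_)
    rw [if_neg (fun hc : i ∉ σ ∧ τ = insert i σ => hi (Finset.mem_compl.mpr hc.1))]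
  rw [lhs, rhs]

end AuxFormulas
section AuxSpaces

variable {n : ℕ}

noncomputable def Lop (n : ℕ) : PolyForm n →ₗ[ℝ] PolyForm n :=
  extD n ∘ₗ koszul n + koszul n ∘ₗ extD n

lemma Lop_apply (ω : PolyForm n) :
    Lop n ω = extD n (koszul n ω) + koszul n (extD n ω) := rfl

lemma Lop_fm (α : Fin n →₀ ℕ) (σ : Finset (Fin n)) :
    Lop n (formMonomial α σ) = ((mdeg α + σ.card : ℕ) : ℝ) • formMonomial α σ :=
  cartan_formMonomial α σ

lemma Lop_koszul (ω : PolyForm n) : Lop n (koszul n ω) = koszul n (Lop n ω) := by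
  rw [Lop_apply, Lop_apply, map_add, koszul_koszul, koszul_koszul, map_zero, zero_add, add_zero]

lemma Lop_extD (ω : PolyForm n) : Lop n (extD n ω) = extD n (Lop n ω) := by
  rw [Lop_apply, Lop_apply, map_add, extD_extD, extD_extD, map_zero, zero_add, add_zero]

lemma Lop_comp_koszul : Lop n ∘ₗ koszul n = koszul n ∘ₗ Lop n :=
  LinearMap.ext fun ω => Lop_koszul ω

lemma Lop_comp_extD : Lop n ∘ₗ extD n = extD n ∘ₗ Lop n :=
  LinearMap.ext fun ω => Lop_extD ω

lemma Lop_span_le {s : Set (PolyForm n)} (hs : ∀ ω ∈ s, ∃ α σ, ω = formMonomial α σ) :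
    Submodule.map (Lop n) (Submodule.span ℝ s) ≤ Submodule.span ℝ s := by
  rw [Submodule.map_span_le]
  intro ω hω
  obtain ⟨α, σ, rfl⟩ := hs ω hω
  rw [Lop_fm]
  exact Submodule.smul_mem _ _ (Submodule.subset_span hω)

lemma Lop_P (r k : ℕ) : Submodule.map (Lop n) (Pspace n r k) ≤ Pspace n r k :=
  Lop_span_le (by rintro ω ⟨α, σ, -, -, rfl⟩; exact ⟨α, σ, rfl⟩)

lemma Lop_Hl (r l k : ℕ) : Submodule.map (Lop n) (Hl n r l k) ≤ Hl n r l k :=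
  Lop_span_le (by rintro ω ⟨α, σ, -, -, -, rfl⟩; exact ⟨α, σ, rfl⟩)

lemma Lop_J (r k : ℕ) : Submodule.map (Lop n) (Jspace n r k) ≤ Jspace n r k := by
  rw [Jspace, Submodule.map_iSup]
  refine iSup_le fun l => ?_
  have : Submodule.map (Lop n) (Submodule.map (koszul n) (Hl n (r + l) (l + 1) (k + 1)))
      ≤ Submodule.map (koszul n) (Hl n (r + l) (l + 1) (k + 1)) := by
    rw [← Submodule.map_comp, Lop_comp_koszul, Submodule.map_comp]
    exact Submodule.map_mono (Lop_Hl _ _ _)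
  exact this.trans (le_iSup (fun l => Submodule.map (koszul n) (Hl n (r + l) (l + 1) (k + 1))) l)

lemma Lop_S (r k : ℕ) : Submodule.map (Lop n) (Sspace n r k) ≤ Sspace n r k := by
  rw [Sspace, Submodule.map_sup, Submodule.map_sup]
  refine sup_le (sup_le ?_ ?_) ?_
  · exact (Lop_P r k).trans (le_sup_left.trans le_sup_left)
  · exact (Lop_J r k).trans (le_sup_right.trans le_sup_left)
  · by_cases hk : k = 0
    · simp [hk]
    · rw [if_neg hk]
      refine le_trans ?_ le_sup_right
      rw [← Submodule.map_comp, Lop_comp_extD, Submodule.map_comp]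
      exact Submodule.map_mono (Lop_J _ _)

lemma P_mono {r r' k : ℕ} (h : r ≤ r') : Pspace n r k ≤ Pspace n r' k :=
  Submodule.span_mono (by rintro ω ⟨α, σ, h1, h2, rfl⟩; exact ⟨α, σ, h1, h2.trans h, rfl⟩)

lemma Hl_mono_l {r l l' k : ℕ} (h : l' ≤ l) : Hl n r l k ≤ Hl n r l' k :=
  Submodule.span_mono (by rintro ω ⟨α, σ, h1, h2, h3, rfl⟩; exact ⟨α, σ, h1, h2, h.trans h3, rfl⟩)

lemma Hl_le_P (r l k : ℕ) : Hl n r l k ≤ Pspace n r k :=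
  Submodule.span_mono (by rintro ω ⟨α, σ, h1, h2, -, rfl⟩; exact ⟨α, σ, h1, h2.le, rfl⟩)

lemma Hl_bot (r l k : ℕ) (h : r < l) : Hl n r l k = ⊥ := by
  rw [Hl, eq_bot_iff]
  rw [Submodule.span_le]
  rintro ω ⟨α, σ, -, h2, h3, -⟩
  exact absurd ((h3.trans (ldeg_le_mdeg α σ)).trans_eq h2) (not_le.mpr h)

lemma J_zero (k : ℕ) : Jspace n 0 k = ⊥ := by
  rw [Jspace, eq_bot_iff]
  refine iSup_le fun l => ?_
  rw [Hl_bot (0 + l) (l + 1) (k + 1) (by omega), Submodule.map_bot]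

lemma extD_fm_mem (α : Fin n →₀ ℕ) (σ : Finset (Fin n)) :
    extD n (formMonomial α σ) ∈ Pspace n (mdeg α - 1) (σ.card + 1) := by
  rw [extD_formMonomial]
  refine Submodule.sum_mem _ fun i hi => ?_
  by_cases h0 : α i = 0
  · rw [h0]
    norm_num
  · refine Submodule.smul_mem _ _ (Submodule.subset_span ⟨α - Finsupp.single i 1, insert i σ,
      ?_, ?_, rfl⟩)
    · rw [Finset.card_insert_of_notMem (Finset.mem_compl.mp hi)]
    · have := mdeg_sub_single α i h0
      omega

lemma extD_P_le (r k : ℕ) :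
    Submodule.map (extD n) (Pspace n r k) ≤ Pspace n (r - 1) (k + 1) := by
  rw [Pspace, Submodule.map_span_le]
  rintro ω ⟨α, σ, hc, hd, rfl⟩
  rw [← hc]
  exact P_mono (by omega) (extD_fm_mem α σ)

lemma koszul_fm_mem (α : Fin n →₀ ℕ) (σ : Finset (Fin n)) :
    koszul n (formMonomial α σ) ∈ Pspace n (mdeg α + 1) (σ.card - 1) := by
  rw [koszul_formMonomial]
  refine Submodule.sum_mem _ fun i hi => ?_
  exact Submodule.smul_mem _ _ (Submodule.subset_span ⟨α + Finsupp.single i 1, σ.erase i,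
    Finset.card_erase_of_mem hi, (mdeg_add_single α i).le, rfl⟩)

lemma koszul_P_le (r k : ℕ) :
    Submodule.map (koszul n) (Pspace n r (k + 1)) ≤ Pspace n (r + 1) k := by
  rw [Pspace, Submodule.map_span_le]
  rintro ω ⟨α, σ, hc, hd, rfl⟩
  have hck : σ.card - 1 = k := by omega
  rw [← hck]
  exact P_mono (by omega) (koszul_fm_mem α σ)

lemma extD_J_le (r k : ℕ) :
    Submodule.map (extD n) (Jspace n (r + 1) k) ≤ Sspace n (r + 1) (k + 1) := by
  rw [Jspace, Submodule.map_iSup]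
  refine iSup_le fun l => ?_
  match l with
  | 0 =>
    intro x hx
    obtain ⟨y, hy, rfl⟩ := Submodule.mem_map.mp hx
    obtain ⟨z, hz, rfl⟩ := Submodule.mem_map.mp hy
    have hzP : z ∈ Pspace n (r + 1) (k + 1) := Hl_le_P _ _ _ hz
    have hL : Lop n z ∈ Pspace n (r + 1) (k + 1) :=
      (Lop_Hl _ _ _).trans (Hl_le_P _ _ _) (Submodule.mem_map_of_mem hz)
    have hdz : extD n z ∈ Pspace n r (k + 2) := by
      have := extD_P_le (n := n) (r + 1) (k + 1) (Submodule.mem_map_of_mem hzP)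
      simpa using this
    have hkd : koszul n (extD n z) ∈ Pspace n (r + 1) (k + 1) :=
      koszul_P_le r (k + 1) (Submodule.mem_map_of_mem hdz)
    have hx : extD n (koszul n z) = Lop n z - koszul n (extD n z) := by
      rw [Lop_apply]; abel
    rw [hx]
    exact Submodule.mem_sup_left (Submodule.mem_sup_left (Submodule.sub_mem _ hL hkd))
  | m + 1 =>
    have harith : r + 1 + (m + 1) = r + 1 + 1 + m := by omega
    have h1 : Submodule.map (extD n)
        (Submodule.map (koszul n) (Hl n (r + 1 + (m + 1)) (m + 1 + 1) (k + 1)))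
        ≤ Submodule.map (extD n) (Jspace n (r + 1 + 1) k) := by
      refine Submodule.map_mono ?_
      refine le_trans ?_ (le_iSup (fun l => Submodule.map (koszul n)
        (Hl n (r + 1 + 1 + l) (l + 1) (k + 1))) m)
      rw [← harith]
      exact Submodule.map_mono (Hl_mono_l (by omega))
    refine h1.trans ?_
    rw [Sspace, if_neg (Nat.succ_ne_zero k)]
    refine le_trans ?_ le_sup_right
    simp

end AuxSpaces
section AuxFinal

variable {n : ℕ}

lemma S_mono (r k : ℕ) : Sspace n r k ≤ Sspace n (r + 1) k := by
  rw [Sspace]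
  refine sup_le (sup_le ?_ ?_) ?_
  · exact (P_mono (by omega)).trans (le_sup_left.trans le_sup_left)
  · refine iSup_le fun l => ?_
    match l with
    | 0 =>
      have h1 : Submodule.map (koszul n) (Hl n (r + 0) 1 (k + 1))
          ≤ Submodule.map (koszul n) (Pspace n r (k + 1)) := by
        refine Submodule.map_mono ?_
        rw [Nat.add_zero]
        exact Hl_le_P _ _ _
      exact (h1.trans (koszul_P_le r k)).trans (le_sup_left.trans le_sup_left)
    | m + 1 =>
      have h1 : Submodule.map (koszul n) (Hl n (r + (m + 1)) (m + 1 + 1) (k + 1))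
          ≤ Jspace n (r + 1) k := by
        refine le_trans ?_ (le_iSup (fun l => Submodule.map (koszul n)
          (Hl n (r + 1 + l) (l + 1) (k + 1))) m)
        rw [show r + 1 + m = r + (m + 1) by omega]
        exact Submodule.map_mono (Hl_mono_l (by omega))
      exact h1.trans (le_sup_right.trans le_sup_left)
  · by_cases hk : k = 0
    · simp [hk]
    · rw [if_neg hk]
      have h1 := extD_J_le (n := n) r (k - 1)
      rw [show k - 1 + 1 = k by omega] at h1
      exact h1
  -- note: Sspace n (r+1) k on the RHS is unfolded? we used le_sup into its parts; check

lemma S_mono_le {a b k : ℕ} (h : a ≤ b) : Sspace n a k ≤ Sspace n b k := by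
  induction b, h using Nat.le_induction with
  | base => exact le_rfl
  | succ b _ ih => exact ih.trans (S_mono b k)

lemma extD_S_le (r k : ℕ) :
    Submodule.map (extD n) (Sspace n r k) ≤ Sspace n (r - 1) (k + 1) := by
  rw [Sspace, Submodule.map_sup, Submodule.map_sup]
  refine sup_le (sup_le ?_ ?_) ?_
  · exact (extD_P_le r k).trans (le_sup_left.trans le_sup_left)
  · match r with
    | 0 =>
      rw [J_zero, Submodule.map_bot]
      exact bot_le
    | R + 1 =>
      rw [show R + 1 - 1 = R by omega, Sspace, if_neg (Nat.succ_ne_zero k)]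
      refine le_trans ?_ le_sup_right
      simp
  · by_cases hk : k = 0
    · simp [hk]
    · rw [if_neg hk, ← Submodule.map_comp,
        show extD n ∘ₗ extD n = (0 : PolyForm n →ₗ[ℝ] PolyForm n) from
          LinearMap.ext fun ω => by simp [LinearMap.comp_apply, extD_extD ω],
        Submodule.map_zero]
      exact bot_le

end AuxFinal

/-- subcomplex property `d S_r^-Λ^k(ℝ^n) ⊆ S_r^-Λ^{k+1}(ℝ^n)`. -/
theorem Sminus_subcomplex (n r k : ℕ) (hn : 1 ≤ n) (hr : 1 ≤ r) (hk : k < n) :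
    Submodule.map (extD n) (SminusSpace n r k) ≤ SminusSpace n r (k + 1) := by
  rw [SminusSpace, Submodule.map_sup]
  refine sup_le ?_ ?_
  · exact ((extD_S_le (r - 1) k).trans (S_mono_le (by omega))).trans le_sup_left
  · intro x hx
    obtain ⟨y, hy, rfl⟩ := Submodule.mem_map.mp hx
    obtain ⟨z, hz, rfl⟩ := Submodule.mem_map.mp hy
    have hL : Lop n z ∈ Sspace n (r - 1) (k + 1) :=
      Lop_S (r - 1) (k + 1) (Submodule.mem_map_of_mem hz)
    have hdz : extD n z ∈ Sspace n (r - 1) (k + 2) :=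
      S_mono_le (show r - 1 - 1 ≤ r - 1 by omega)
        (extD_S_le (r - 1) (k + 1) (Submodule.mem_map_of_mem hz))
    have hkd : koszul n (extD n z)
        ∈ Submodule.map (koszul n) (Sspace n (r - 1) (k + 1 + 1)) :=
      Submodule.mem_map_of_mem hdz
    have hx2 : extD n (koszul n z) = Lop n z - koszul n (extD n z) := by
      rw [Lop_apply]; abel
    rw [hx2]
    exact Submodule.sub_mem _ (Submodule.mem_sup_left hL) (Submodule.mem_sup_right hkd)
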